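/- Suppose x(t) solves ẋ = f(t,x) in ℝ^d with f(t,0)=0, where f satisfies Assumption 1 with constants D₀, R and Assumption 2 with decay rate μ₀ (Jacobian at 0 time-independent diagonal with diagonal entries ≤ -μ₀). If 0 < ‖x₀‖₂ < R²μ₀/(D₀+Rμ₀), then ‖x(t)‖₂ ≤ ‖x₀‖₂ exp(-(μ₀ - D₀‖x₀‖₂/(R(R-‖x₀‖₂)))(t-t_0)) for all t ≥ t_0; in particular the origin is exponentially attracting from this ball since μ₀ - D₀‖x₀‖₂/(R(R-‖x₀‖₂)) > 0. -/

import Mathlib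

open scoped BigOperators
open Real Set Filter Topology
set_option maxHeartbeats 1000000

instance stmt15_finite (d k : ℕ) : Finite {α : Fin d → ℕ // ∑ i, α i = k} := by
  apply Finite.of_injective
    (fun a => (fun i => (⟨a.1 i, Nat.lt_succ_of_le
      (le_of_le_of_eq (Finset.single_le_sum (fun _ _ => Nat.zero_le _) (Finset.mem_univ i)) a.2)⟩ :
      Fin (k+1))) : _ → (Fin d → Fin (k+1)))
  intro a b h
  ext i
  exact congrArg Fin.val (congrFun h i)

lemma stmt15_coord (d : ℕ) (y : EuclideanSpace ℝ (Fin d)) (i : Fin d) : |y i| ≤ ‖y‖ := by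
  rw [EuclideanSpace.norm_eq, ← Real.sqrt_sq_eq_abs]
  apply Real.sqrt_le_sqrt
  simpa using Finset.single_le_sum (f := fun j => (y j) ^ 2)
    (fun j _ => sq_nonneg _) (Finset.mem_univ i)

lemma stmt15_sum_one {d : ℕ} (α : Fin d → ℕ) (h : ∑ i, α i = 1) :
    ∃ i, α = fun i' => if i' = i then 1 else 0 := by
  have hne : ∃ i, α i ≠ 0 := by
    by_contra hc
    push_neg at hc
    simp [hc] at h
  obtain ⟨i, hi⟩ := hne
  refine ⟨i, ?_⟩
  have hsplit := Finset.add_sum_erase Finset.univ α (Finset.mem_univ i)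
  rw [h] at hsplit
  have hαi : α i = 1 := by omega
  have hrest : ∑ j ∈ Finset.univ.erase i, α j = 0 := by omega
  have hz : ∀ j ∈ Finset.univ.erase i, α j = 0 := by
    intro j hj
    exact (Finset.sum_eq_zero_iff.1 hrest) j hj
  funext i'
  by_cases hii : i' = i
  · simp [hii, hαi]
  · simp [hii, hz i' (Finset.mem_erase.2 ⟨hii, Finset.mem_univ _⟩)]

lemma stmt15_inner (d : ℕ) (t₀ D₀ R μ₀ : ℝ)
    (hD₀ : 0 < D₀) (hR : 0 < R) (hμ₀ : 0 < μ₀)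
    (c : (Fin d → ℕ) → ℝ → Fin d → ℝ)
    (hzero : ∀ t, c 0 t = 0)
    (hdecay : ∀ k : ℕ, 1 ≤ k → ∀ t, t₀ ≤ t →
      ∑ j, ∑' α : {α : Fin d → ℕ // ∑ i, α i = k}, |c α.1 t j| ≤ D₀ / R ^ k)
    (lam : Fin d → ℝ)
    (hjac : ∀ (t : ℝ) (i j : Fin d),
      c (fun i' => if i' = i then 1 else 0) t j = if j = i then lam i else 0)
    (hlam : ∀ i, lam i ≤ -μ₀)
    (y : EuclideanSpace ℝ (Fin d)) (t : ℝ) (ht : t₀ ≤ t)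
    (r : ℝ) (hrR : r < R) (hy : ‖y‖ ≤ r) :
    (inner ℝ y (WithLp.toLp 2 (fun j => ∑' α : (Fin d → ℕ), c α t j * ∏ i, (y i) ^ (α i)) :
        EuclideanSpace ℝ (Fin d)) : ℝ)
      ≤ -(μ₀ - D₀ * r / (R * (R - r))) * ‖y‖ ^ 2 := by
  set s := ‖y‖ with hsdef
  have hs0 : 0 ≤ s := norm_nonneg y
  have hr0 : 0 ≤ r := le_trans hs0 hy
  have hsR : s < R := lt_of_le_of_lt hy hrR
  have hq0 : 0 ≤ s / R := div_nonneg hs0 hR.le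
  have hq1 : s / R < 1 := (div_lt_one hR).2 hsR
  have hπ : ∀ α : Fin d → ℕ, |∏ i, (y i) ^ (α i)| ≤ s ^ (∑ i, α i) := by
    intro α
    rw [Finset.abs_prod]
    calc ∏ i, |(y i) ^ (α i)| ≤ ∏ i, s ^ (α i) := by
          apply Finset.prod_le_prod (fun i _ => abs_nonneg _)
          intro i _
          rw [abs_pow]
          exact pow_le_pow_left₀ (abs_nonneg _) (stmt15_coord d y i) _
      _ = s ^ (∑ i, α i) := Finset.prod_pow_eq_pow_sum _ _ _
  set C : ℕ → Fin d → ℝ :=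
    fun k j => ∑' α : {α : Fin d → ℕ // ∑ i, α i = k}, |c α.1 t j| with hCdef
  have hCnn : ∀ k j, 0 ≤ C k j := fun k j => tsum_nonneg (fun _ => abs_nonneg _)
  have hCsum : ∀ k, 1 ≤ k → ∑ j, C k j ≤ D₀ / R ^ k := fun k hk => hdecay k hk t ht
  have hCj : ∀ k, 1 ≤ k → ∀ j, C k j ≤ D₀ / R ^ k := fun k hk j =>
    le_trans (Finset.single_le_sum (fun j _ => hCnn k j) (Finset.mem_univ j)) (hCsum k hk)
  have hC0 : ∀ j, C 0 j = 0 := by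
    intro j
    rw [hCdef]
    have hall : ∀ α : {α : Fin d → ℕ // ∑ i, α i = 0}, |c α.1 t j| = 0 := by
      intro α
      have h0 : α.1 = 0 := funext fun i => (Finset.sum_eq_zero_iff.1 α.2) i (Finset.mem_univ i)
      rw [h0, hzero t]
      simp
    calc (∑' α : {α : Fin d → ℕ // ∑ i, α i = 0}, |c α.1 t j|)
        = ∑' _ : {α : Fin d → ℕ // ∑ i, α i = 0}, (0:ℝ) := tsum_congr hall
      _ = 0 := tsum_zero
  have hgeo : Summable (fun k : ℕ => D₀ * (s / R) ^ k) :=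
    (summable_geometric_of_lt_one hq0 hq1).mul_left _
  have hCb : ∀ j k, C k j * s ^ k ≤ D₀ * (s / R) ^ k := by
    intro j k
    cases k with
    | zero => simp [hC0 j, hD₀.le]
    | succ n =>
        calc C (n+1) j * s ^ (n+1) ≤ (D₀ / R ^ (n+1)) * s ^ (n+1) :=
              mul_le_mul_of_nonneg_right (hCj (n+1) (Nat.succ_le_succ (Nat.zero_le n)) j)
                (pow_nonneg hs0 _)
          _ = D₀ * (s / R) ^ (n+1) := by rw [div_pow]; ring
  have hTsummable : ∀ j, Summable (fun k : ℕ => C (k+2) j * s ^ (k+2)) := by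
    intro j
    apply Summable.of_nonneg_of_le
      (fun k => mul_nonneg (hCnn _ j) (pow_nonneg hs0 _))
      (fun k => hCb j (k+2))
    exact (summable_nat_add_iff 2).2 hgeo
  -- main per-coordinate decomposition
  have main : ∀ j : Fin d, ∃ Nj : ℝ,
      (∑' α : (Fin d → ℕ), c α t j * ∏ i, (y i) ^ (α i)) = lam j * y j + Nj ∧
      |Nj| ≤ ∑' k : ℕ, C (k+2) j * s ^ (k+2) := by
    intro j
    set g : (Fin d → ℕ) → ℝ := fun α => c α t j * ∏ i, (y i) ^ (α i) with hgdef
    set e := Equiv.sigmaFiberEquiv (fun α : Fin d → ℕ => ∑ i, α i) with hedef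
    have habs : ∀ k : ℕ, (∑' α : {α : Fin d → ℕ // ∑ i, α i = k}, |g α.1|) ≤ C k j * s ^ k := by
      intro k
      have hb : ∀ α : {α : Fin d → ℕ // ∑ i, α i = k}, |g α.1| ≤ |c α.1 t j| * s ^ k := by
        intro α
        rw [hgdef, abs_mul]
        exact mul_le_mul_of_nonneg_left (le_of_le_of_eq (hπ α.1) (by rw [α.2])) (abs_nonneg _)
      calc (∑' α : {α : Fin d → ℕ // ∑ i, α i = k}, |g α.1|)
          ≤ ∑' α : {α : Fin d → ℕ // ∑ i, α i = k}, |c α.1 t j| * s ^ k :=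
            Summable.tsum_le_tsum hb .of_finite .of_finite
        _ = C k j * s ^ k := by rw [hCdef, tsum_mul_right]
    have hfibnn : ∀ k : ℕ, (0:ℝ) ≤ ∑' α : {α : Fin d → ℕ // ∑ i, α i = k}, |g α.1| :=
      fun k => tsum_nonneg (fun _ => abs_nonneg _)
    have hsumAbs : Summable (fun k : ℕ => ∑' α : {α : Fin d → ℕ // ∑ i, α i = k}, |g α.1|) :=
      Summable.of_nonneg_of_le hfibnn (fun k => (habs k).trans (hCb j k)) hgeo
    have hsig : Summable (fun p : (Σ k : ℕ, {α : Fin d → ℕ // ∑ i, α i = k}) => |g (e p)|) := by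
      apply (summable_sigma_of_nonneg (fun _ => abs_nonneg _)).2
      exact ⟨fun k => .of_finite, hsumAbs⟩
    have hgsum : Summable g := summable_abs_iff.1 (e.summable_iff.1 hsig)
    have hge : Summable (g ∘ e) := e.summable_iff.2 hgsum
    set A : ℕ → ℝ := fun k => ∑' α : {α : Fin d → ℕ // ∑ i, α i = k}, g α.1 with hAdef
    have hdec : ∑' α : (Fin d → ℕ), g α = ∑' k : ℕ, A k := by
      rw [← e.tsum_eq g]
      exact Summable.tsum_sigma hge
    have hAabs : ∀ k, |A k| ≤ ∑' α : {α : Fin d → ℕ // ∑ i, α i = k}, |g α.1| := by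
      intro k
      simpa using norm_tsum_le_tsum_norm
        (f := fun α : {α : Fin d → ℕ // ∑ i, α i = k} => g α.1) .of_finite
    have hAabs_sum : Summable (fun k => |A k|) :=
      Summable.of_nonneg_of_le (fun k => abs_nonneg _) hAabs hsumAbs
    have hAsum : Summable A := summable_abs_iff.1 hAabs_sum
    have hA0 : A 0 = 0 := by
      rw [hAdef]
      have hall : ∀ α : {α : Fin d → ℕ // ∑ i, α i = 0}, g α.1 = 0 := by
        intro α
        have h0 : α.1 = 0 := funext fun i => (Finset.sum_eq_zero_iff.1 α.2) i (Finset.mem_univ i)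
        rw [hgdef]
        simp [h0, hzero t]
      calc (∑' α : {α : Fin d → ℕ // ∑ i, α i = 0}, g α.1)
          = ∑' _ : {α : Fin d → ℕ // ∑ i, α i = 0}, (0:ℝ) := tsum_congr hall
        _ = 0 := tsum_zero
    have hA1 : A 1 = lam j * y j := by
      have hfin : Finite {α : Fin d → ℕ // ∑ i, α i = 1} := stmt15_finite d 1
      let f : Fin d → {α : Fin d → ℕ // ∑ i, α i = 1} :=
        fun i => ⟨fun i' => if i' = i then 1 else 0, by simp⟩
      have hbij : Function.Bijective f := by
        constructor
        · intro i i' h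
          by_contra hne
          have h2 := congrFun (congrArg Subtype.val h) i
          simp [f, hne] at h2
        · intro α
          obtain ⟨i, hi⟩ := stmt15_sum_one α.1 α.2
          exact ⟨i, Subtype.ext hi.symm⟩
      have h1 : A 1 = ∑' i : Fin d, g (f i).1 :=
        ((Equiv.ofBijective f hbij).tsum_eq
          (fun α : {α : Fin d → ℕ // ∑ i, α i = 1} => g α.1)).symm
      rw [h1, tsum_fintype]
      have hterm : ∀ i, g (f i).1 = (if j = i then lam i else 0) * y i := by
        intro i
        have hπ1 : (∏ i', (y i') ^ ((fun i' => if i' = i then 1 else 0 : Fin d → ℕ) i')) = y i := by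
          rw [Finset.prod_eq_single i (fun b _ hb => by simp [hb]) (by simp)]
          simp
        rw [hgdef]
        show c (fun i' => if i' = i then 1 else 0) t j *
          (∏ i', (y i') ^ ((fun i' => if i' = i then 1 else 0 : Fin d → ℕ) i')) = _
        rw [hjac t i j, hπ1]
      rw [Finset.sum_congr rfl (fun i _ => hterm i)]
      simp [ite_mul, Finset.sum_ite_eq]
    have hshift1 : Summable (fun k => A (k+1)) := (summable_nat_add_iff 1).2 hAsum
    have hshift2 : Summable (fun k => A (k+2)) := (summable_nat_add_iff 2).2 hAsum
    refine ⟨∑' k : ℕ, A (k+2), ?_, ?_⟩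
    · show (∑' α : (Fin d → ℕ), g α) = _
      rw [hdec, Summable.tsum_eq_zero_add hAsum, Summable.tsum_eq_zero_add hshift1, hA0, hA1]
      have : (fun k : ℕ => A (k+1+1)) = fun k : ℕ => A (k+2) := by
        funext k; norm_num
      rw [this]
      ring
    · calc |∑' k : ℕ, A (k+2)| ≤ ∑' k : ℕ, |A (k+2)| := by
            simpa using norm_tsum_le_tsum_norm (f := fun k => A (k+2))
              ((summable_nat_add_iff 2).2 hAabs_sum)
        _ ≤ ∑' k : ℕ, C (k+2) j * s ^ (k+2) :=
            Summable.tsum_le_tsum (fun k => (hAabs (k+2)).trans (habs (k+2)))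
              ((summable_nat_add_iff 2).2 hAabs_sum) (hTsummable j)
  choose N hN1 hN2 using main
  have hNsum : ∑ j, |N j| ≤ D₀ * (s / R) ^ 2 * (1 - s / R)⁻¹ := by
    calc ∑ j, |N j| ≤ ∑ j, ∑' k : ℕ, C (k+2) j * s ^ (k+2) :=
          Finset.sum_le_sum (fun j _ => hN2 j)
      _ = ∑' k : ℕ, ∑ j, C (k+2) j * s ^ (k+2) := (Summable.tsum_finsetSum (fun j _ => hTsummable j)).symm
      _ ≤ ∑' k : ℕ, D₀ * (s / R) ^ 2 * (s / R) ^ k := by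
          apply Summable.tsum_le_tsum _ (summable_sum (fun j _ => hTsummable j))
            ((summable_geometric_of_lt_one hq0 hq1).mul_left _)
          intro k
          rw [← Finset.sum_mul]
          have h1 : (∑ j, C (k+2) j) * s ^ (k+2) ≤ (D₀ / R ^ (k+2)) * s ^ (k+2) :=
            mul_le_mul_of_nonneg_right (hCsum (k+2) (by omega)) (pow_nonneg hs0 _)
          refine h1.trans (le_of_eq ?_)
          have e2 : (s / R : ℝ) ^ 2 * (s / R) ^ k = (s / R) ^ (k + 2) := by
            rw [← pow_add, Nat.add_comm 2 k]
          rw [mul_assoc, e2, div_pow]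
          ring
      _ = D₀ * (s / R) ^ 2 * ∑' k : ℕ, (s / R) ^ k := tsum_mul_left
      _ = D₀ * (s / R) ^ 2 * (1 - s / R)⁻¹ := by rw [tsum_geometric_of_lt_one hq0 hq1]
  have hnormsq : ∑ j, (y j) ^ 2 = s ^ 2 := by
    rw [hsdef, EuclideanSpace.norm_eq, Real.sq_sqrt (Finset.sum_nonneg (fun j _ => sq_nonneg _))]
    · simp [sq_abs]
  have hG : s * (D₀ * (s / R) ^ 2 * (1 - s / R)⁻¹) ≤ D₀ * r / (R * (R - r)) * s ^ 2 := by
    have hRs : 0 < R - s := by linarith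
    have hRr : 0 < R - r := by linarith
    have h1 : (1 - s / R)⁻¹ = R / (R - s) := by
      rw [one_sub_div hR.ne', inv_div]
    rw [h1]
    have eL : s * (D₀ * (s / R) ^ 2 * (R / (R - s))) = D₀ * s ^ 3 / (R * (R - s)) := by
      field_simp
    have eR : D₀ * r / (R * (R - r)) * s ^ 2 = D₀ * r * s ^ 2 / (R * (R - r)) := by
      ring
    rw [eL, eR, div_le_div_iff₀ (by positivity) (by positivity)]
    nlinarith [mul_nonneg (mul_nonneg (mul_nonneg hD₀.le hR.le) (sq_nonneg s))
      (mul_nonneg hR.le (sub_nonneg.2 hy)), sq_nonneg s]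
  have hinner : (inner ℝ y (WithLp.toLp 2 (fun j => ∑' α : (Fin d → ℕ), c α t j * ∏ i, (y i) ^ (α i)) :
      EuclideanSpace ℝ (Fin d)) : ℝ) = ∑ j, y j * (lam j * y j + N j) := by
    rw [PiLp.inner_apply]
    apply Finset.sum_congr rfl
    intro j _
    rw [RCLike.inner_apply', conj_trivial]
    congr 1
    exact hN1 j
  rw [hinner]
  calc ∑ j, y j * (lam j * y j + N j)
      = ∑ j, lam j * (y j) ^ 2 + ∑ j, y j * N j := by
        rw [← Finset.sum_add_distrib]
        apply Finset.sum_congr rfl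
        intro j _
        ring
    _ ≤ -μ₀ * s ^ 2 + D₀ * r / (R * (R - r)) * s ^ 2 := by
        apply add_le_add
        · calc ∑ j, lam j * (y j) ^ 2 ≤ ∑ j, -μ₀ * (y j) ^ 2 :=
                Finset.sum_le_sum (fun j _ => mul_le_mul_of_nonneg_right (hlam j) (sq_nonneg _))
            _ = -μ₀ * ∑ j, (y j) ^ 2 := by rw [Finset.mul_sum]
            _ = -μ₀ * s ^ 2 := by rw [hnormsq]
        · calc ∑ j, y j * N j ≤ ∑ j, s * |N j| := by
                apply Finset.sum_le_sum
                intro j _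
                refine (le_abs_self _).trans ?_
                rw [abs_mul]
                exact mul_le_mul_of_nonneg_right (stmt15_coord d y j) (abs_nonneg _)
            _ = s * ∑ j, |N j| := (Finset.mul_sum _ _ _).symm
            _ ≤ s * (D₀ * (s / R) ^ 2 * (1 - s / R)⁻¹) :=
                mul_le_mul_of_nonneg_left hNsum hs0
            _ ≤ D₀ * r / (R * (R - r)) * s ^ 2 := hG
    _ = -(μ₀ - D₀ * r / (R * (R - r))) * s ^ 2 := by ring

theorem stmt_15 (d : ℕ) (hd : 1 ≤ d) (t₀ D₀ R μ₀ : ℝ)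
    (hD₀ : 0 < D₀) (hR : 0 < R) (hμ₀ : 0 < μ₀)
    (c : (Fin d → ℕ) → ℝ → Fin d → ℝ)
    (hzero : ∀ t, c 0 t = 0)
    (hdecay : ∀ k : ℕ, 1 ≤ k → ∀ t, t₀ ≤ t →
      ∑ j, ∑' α : {α : Fin d → ℕ // ∑ i, α i = k}, |c α.1 t j| ≤ D₀ / R ^ k)
    (lam : Fin d → ℝ)
    (hjac : ∀ (t : ℝ) (i j : Fin d),
      c (fun i' => if i' = i then 1 else 0) t j = if j = i then lam i else 0)
    (hlam : ∀ i, lam i ≤ -μ₀)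
    (x : ℝ → EuclideanSpace ℝ (Fin d)) (x₀ : EuclideanSpace ℝ (Fin d))
    (hx0 : x t₀ = x₀)
    (hode : ∀ t, t₀ ≤ t → HasDerivAt x
      (WithLp.toLp 2 (fun j => ∑' α : (Fin d → ℕ), c α t j * ∏ i, (x t i) ^ (α i)) :
        EuclideanSpace ℝ (Fin d)) t)
    (hx₀pos : 0 < ‖x₀‖) (hx₀small : ‖x₀‖ < R^2 * μ₀ / (D₀ + R * μ₀)) :
    0 < μ₀ - D₀ * ‖x₀‖ / (R * (R - ‖x₀‖)) ∧
    ∀ t, t₀ ≤ t →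
      ‖x t‖ ≤ ‖x₀‖ * Real.exp (-(μ₀ - D₀ * ‖x₀‖ / (R * (R - ‖x₀‖))) * (t - t₀)) := by
  have hbound : R ^ 2 * μ₀ / (D₀ + R * μ₀) ≤ R := by
    rw [div_le_iff₀ (by positivity)]
    nlinarith
  have hrR : ‖x₀‖ < R := lt_of_lt_of_le hx₀small hbound
  have hRr : 0 < R - ‖x₀‖ := by linarith
  have hQK : 0 < μ₀ - D₀ * ‖x₀‖ / (R * (R - ‖x₀‖)) := by
    rw [sub_pos, div_lt_iff₀ (by positivity)]
    have h2 := (lt_div_iff₀ (by positivity : (0:ℝ) < D₀ + R * μ₀)).1 hx₀small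
    nlinarith
  set K := μ₀ - D₀ * ‖x₀‖ / (R * (R - ‖x₀‖)) with hKdef
  refine ⟨hQK, ?_⟩
  set F : ℝ → EuclideanSpace ℝ (Fin d) :=
    fun t => WithLp.toLp 2 (fun j => ∑' α : (Fin d → ℕ), c α t j * ∏ i, (x t i) ^ (α i)) with hFdef
  have hv' : ∀ t, t₀ ≤ t →
      HasDerivAt (fun τ => ‖x τ‖ ^ 2) (2 * (inner ℝ (x t) (F t) : ℝ)) t := by
    intro t ht
    have hx' := hode t ht
    have hD := HasDerivAt.inner ℝ hx' hx'
    have h2 : (inner ℝ (x t) (F t) + inner ℝ (F t) (x t) : ℝ) = 2 * inner ℝ (x t) (F t) := by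
      rw [real_inner_comm (F t) (x t)]; ring
    rw [h2] at hD
    have heq : (fun τ => (inner ℝ (x τ) (x τ) : ℝ)) = fun τ => ‖x τ‖ ^ 2 := by
      funext τ
      exact real_inner_self_eq_norm_sq _
    rwa [heq] at hD
  have step : ∀ n : ℕ, ∀ t, t₀ ≤ t →
      ‖x t‖ ^ 2 ≤ ‖x₀‖ ^ 2 * Real.exp (-(2 * (K - K / (n+1))) * (t - t₀)) := by
    intro n t ht
    set Kn := K - K / (n+1 : ℝ) with hKn
    have hn1 : (0:ℝ) < (n:ℝ) + 1 := by positivity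
    have hKn0 : 0 ≤ Kn := by
      rw [hKn, sub_nonneg, div_le_iff₀ hn1]
      nlinarith [hQK]
    have hKnK : Kn < K := by
      have : 0 < K / ((n:ℝ)+1) := div_pos hQK hn1
      rw [hKn]
      linarith
    set B : ℝ → ℝ := fun τ => ‖x₀‖ ^ 2 * Real.exp (-(2*Kn) * (τ - t₀)) with hB
    have hB' : ∀ τ, HasDerivAt B (-(2*Kn) * B τ) τ := by
      intro τ
      have h1 : HasDerivAt (fun τ => -(2*Kn) * (τ - t₀)) (-(2*Kn)) τ := by
        simpa using ((hasDerivAt_id τ).sub_const t₀).const_mul (-(2*Kn))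
      have h2 := h1.exp.const_mul (‖x₀‖ ^ 2)
      refine h2.congr_deriv ?_
      simp only [hB]
      ring
    have happ := image_le_of_deriv_right_lt_deriv_boundary
      (f := fun τ => ‖x τ‖ ^ 2) (f' := fun τ => 2 * (inner ℝ (x τ) (F τ) : ℝ))
      (a := t₀) (b := t) (B := B) (B' := fun τ => -(2*Kn) * B τ)
      (fun τ hτ => ((hv' τ hτ.1).continuousAt).continuousWithinAt)
      (fun τ hτ => (hv' τ hτ.1).hasDerivWithinAt)
      (by show ‖x t₀‖ ^ 2 ≤ B t₀; rw [hx0, hB]; simp)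
      hB'
      ?_ ⟨ht, le_refl t⟩
    · exact happ
    · intro τ hτ heq
      have hexp1 : Real.exp (-(2*Kn) * (τ - t₀)) ≤ 1 := by
        rw [Real.exp_le_one_iff]
        have h4 : 0 ≤ (2*Kn) * (τ - t₀) := mul_nonneg (by linarith) (by linarith [hτ.1])
        nlinarith [h4]
      have hBle : B τ ≤ ‖x₀‖ ^ 2 := by
        have hBτ : B τ = ‖x₀‖ ^ 2 * Real.exp (-(2*Kn) * (τ - t₀)) := rfl
        rw [hBτ]
        exact mul_le_of_le_one_right (sq_nonneg _) hexp1
      have hxτ : ‖x τ‖ ≤ ‖x₀‖ := by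
        have h3 : ‖x τ‖ ^ 2 ≤ ‖x₀‖ ^ 2 := heq.le.trans hBle
        nlinarith [norm_nonneg (x τ), norm_nonneg x₀]
      have hkey := stmt15_inner d t₀ D₀ R μ₀ hD₀ hR hμ₀ c hzero hdecay lam hjac hlam
        (x τ) τ hτ.1 ‖x₀‖ hrR hxτ
      have hBpos : 0 < B τ := by
        rw [hB]
        exact mul_pos (pow_pos hx₀pos 2) (Real.exp_pos _)
      calc 2 * (inner ℝ (x τ) (F τ) : ℝ) ≤ 2 * (-K * ‖x τ‖ ^ 2) := by
            have : (inner ℝ (x τ) (F τ) : ℝ) ≤ -K * ‖x τ‖ ^ 2 := hkey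
            linarith
        _ = -(2*K) * B τ := by rw [← heq]; ring
        _ < -(2*Kn) * B τ := by nlinarith
  intro t ht
  have hlim : Tendsto (fun n : ℕ => ‖x₀‖ * Real.exp (-(K - K / (n+1)) * (t - t₀))) atTop
      (𝓝 (‖x₀‖ * Real.exp (-K * (t - t₀)))) := by
    have h0 : Tendsto (fun n : ℕ => K / ((n:ℝ) + 1)) atTop (𝓝 0) := by
      apply Tendsto.div_atTop tendsto_const_nhds
      exact tendsto_atTop_add_const_right _ 1 tendsto_natCast_atTop_atTop
    have hc : Continuous fun z : ℝ => ‖x₀‖ * Real.exp (-(K - z) * (t - t₀)) := by continuity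
    have h1 := (hc.tendsto 0).comp h0
    simpa [Function.comp_def] using h1
  apply ge_of_tendsto' hlim
  intro n
  have hs := step n t ht
  have he : ‖x₀‖ ^ 2 * Real.exp (-(2 * (K - K / (n+1))) * (t - t₀))
      = (‖x₀‖ * Real.exp (-(K - K / (n+1)) * (t - t₀))) ^ 2 := by
    rw [mul_pow, sq (Real.exp _), ← Real.exp_add]
    congr 2
    ring
  rw [he] at hs
  have hb0 : 0 ≤ ‖x₀‖ * Real.exp (-(K - K / (n+1)) * (t - t₀)) := by positivity
  calc ‖x t‖ = √(‖x t‖ ^ 2) := (Real.sqrt_sq (norm_nonneg _)).symm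
    _ ≤ √((‖x₀‖ * Real.exp (-(K - K / (n+1)) * (t - t₀))) ^ 2) := Real.sqrt_le_sqrt hs
    _ = ‖x₀‖ * Real.exp (-(K - K / (n+1)) * (t - t₀)) := Real.sqrt_sq hb0
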